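/- For every finite nonempty subset L ⊆ ℕ_{≥2}, there exist a numerical monoid M and an element m ∈ M such that the length set of m in M equals L. -/

import Mathlib

/-- An atom of the additive submonoid `M`: a nonzero element of `M` that is not the
sum of two nonzero elements of `M`. -/
def IsAtomOf {α : Type*} [AddCommMonoid α] (M : AddSubmonoid α) (a : α) : Prop :=
  a ∈ M ∧ a ≠ 0 ∧ ∀ b ∈ M, ∀ c ∈ M, b + c = a → b = 0 ∨ c = 0

/-- The length set of `q` in `M`: the set of all `ℓ` such that `q` is a sum of `ℓ`
atoms of `M` (counted with multiplicity). -/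
def LengthSet {α : Type*} [AddCommMonoid α] (M : AddSubmonoid α) (q : α) : Set ℕ :=
  {ℓ | ∃ s : Multiset α, Multiset.card s = ℓ ∧ (∀ a ∈ s, IsAtomOf M a) ∧ s.sum = q}

/-- The additive submonoid `M` satisfies the ACCP: every ascending chain of principal
ideals `f n + M ⊆ f (n+1) + M` stabilizes. -/
def AddACCP {α : Type*} [AddCommMonoid α] (M : AddSubmonoid α) : Prop :=
  ∀ f : ℕ → α, (∀ n, f n ∈ M) → (∀ n, ∃ c ∈ M, f n = f (n + 1) + c) →
    ∃ N, ∀ n ≥ N, ∃ c ∈ M, f n = f N + c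

/-- The Puiseux monoid generated by the reciprocals of the elements of `P`. -/
def MP (P : Set ℕ) : AddSubmonoid ℚ :=
  AddSubmonoid.closure {q : ℚ | ∃ p ∈ P, q = 1 / (p : ℚ)}

namespace Stmt10Aux


/-- Uniqueness of bounded-digit base-`B` representations. -/
lemma digit_unique {B : ℕ} (hB : 1 < B) :
    ∀ (N : ℕ) (f g : ℕ → ℕ), (∀ i, f i < B) → (∀ i, g i < B) →
      (∑ i ∈ Finset.range N, f i * B ^ i) = (∑ i ∈ Finset.range N, g i * B ^ i) →
      ∀ i, i < N → f i = g i := by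
  intro N
  induction N with
  | zero => exact fun f g _ _ _ i hi => absurd hi (Nat.not_lt_zero i)
  | succ N ih =>
    intro f g hf hg hsum i hi
    rw [Finset.sum_range_succ', Finset.sum_range_succ'] at hsum
    have key : ∀ h : ℕ → ℕ,
        (∑ i ∈ Finset.range N, h (i + 1) * B ^ (i + 1)) =
          B * ∑ i ∈ Finset.range N, h (i + 1) * B ^ i := by
      intro h
      rw [Finset.mul_sum]
      exact Finset.sum_congr rfl fun j _ => by ring
    rw [key f, key g] at hsum
    simp only [pow_zero, mul_one] at hsum
    have h0 : f 0 = g 0 := by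
      have h1 := congrArg (· % B) hsum
      simpa [Nat.mul_add_mod, Nat.mod_eq_of_lt (hf 0), Nat.mod_eq_of_lt (hg 0)] using h1
    rw [h0] at hsum
    have hS := Nat.eq_of_mul_eq_mul_left (show 0 < B by omega) (Nat.add_right_cancel hsum)
    rcases i with _ | j
    · exact h0
    · exact ih (fun i => f (i + 1)) (fun i => g (i + 1)) (fun i => hf _) (fun i => hg _)
        hS j (by omega)

lemma sum_ite_pow (B N a cval : ℕ) (ha : a < N) :
    (∑ i ∈ Finset.range N, (if i = a then cval else 0) * B ^ i) = cval * B ^ a := by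
  simp only [ite_mul, zero_mul]
  rw [Finset.sum_ite_eq' (Finset.range N) a fun i => cval * B ^ i]
  simp [ha]

lemma sum_pow_count {B N : ℕ} (u : Multiset ℕ) (hu : ∀ a ∈ u, a < N) :
    (u.map (fun a => B ^ a)).sum = ∑ i ∈ Finset.range N, u.count i * B ^ i := by
  induction u using Multiset.induction with
  | empty => simp
  | cons a s ih =>
    have ha : a < N := hu a (Multiset.mem_cons_self a s)
    rw [Multiset.map_cons, Multiset.sum_cons,
      ih (fun b hb => hu b (Multiset.mem_cons_of_mem hb))]
    have hcnt : ∀ i ∈ Finset.range N,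
        (a ::ₘ s).count i * B ^ i = s.count i * B ^ i + (if i = a then 1 else 0) * B ^ i := by
      intro i _
      rw [Multiset.count_cons]
      ring
    rw [Finset.sum_congr rfl hcnt, Finset.sum_add_distrib, sum_ite_pow B N a 1 ha]
    ring



lemma euclid {nn a b F F' : ℕ} (hF : F < nn) (hF' : F' < nn)
    (h : a * nn + F = b * nn + F') : a = b ∧ F = F' := by
  have h1 : ∀ k c : ℕ, c < nn → (k * nn + c) % nn = c := by
    intro k c hc
    rw [add_comm, Nat.add_mul_mod_self_right, Nat.mod_eq_of_lt hc]
  have hFF : F = F' := by rw [← h1 a F hF, h, h1 b F' hF']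
  refine ⟨?_, hFF⟩
  have hab : a * nn = b * nn := by omega
  exact Nat.eq_of_mul_eq_mul_right (by omega) hab

lemma decomp (L : Set ℕ) (cc dd : ℕ → ℕ) (n : ℕ) :
    ∀ s : Multiset ℕ,
      (∀ a ∈ s, a = n ∨ (∃ ℓ ∈ L, a = cc ℓ) ∨ (∃ ℓ ∈ L, a = dd ℓ)) →
      ∃ (x : ℕ) (u v : Multiset ℕ), (∀ ℓ ∈ u, ℓ ∈ L) ∧ (∀ ℓ ∈ v, ℓ ∈ L) ∧
        Multiset.card s = x + Multiset.card u + Multiset.card v ∧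
        s.sum = x * n + (u.map cc).sum + (v.map dd).sum := by
  intro s
  induction s using Multiset.induction with
  | empty => exact fun _ => ⟨0, 0, 0, by simp, by simp, by simp, by simp⟩
  | cons a s ih =>
    intro hs
    obtain ⟨x, u, v, hu, hv, hcard, hsum⟩ :=
      ih fun b hb => hs b (Multiset.mem_cons_of_mem hb)
    rcases hs a (Multiset.mem_cons_self a s) with rfl | ⟨ℓ, hℓ, rfl⟩ | ⟨ℓ, hℓ, rfl⟩
    · refine ⟨x + 1, u, v, hu, hv, ?_, ?_⟩
      · simp only [Multiset.card_cons, hcard]; omega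
      · rw [Multiset.sum_cons, hsum]; ring
    · refine ⟨x, ℓ ::ₘ u, v, ?_, hv, ?_, ?_⟩
      · exact fun b hb => (Multiset.mem_cons.mp hb).elim (fun h => h ▸ hℓ) (hu b)
      · simp only [Multiset.card_cons, hcard]; omega
      · rw [Multiset.sum_cons, hsum, Multiset.map_cons, Multiset.sum_cons]; ring
    · refine ⟨x, u, ℓ ::ₘ v, hu, ?_, ?_, ?_⟩
      · exact fun b hb => (Multiset.mem_cons.mp hb).elim (fun h => h ▸ hℓ) (hv b)
      · simp only [Multiset.card_cons, hcard]; omega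
      · rw [Multiset.sum_cons, hsum, Multiset.map_cons, Multiset.sum_cons]; ring


lemma fpart (T : ℕ) (hT2 : 2 ≤ T) (u v : Multiset ℕ)
    (hu : ∀ a ∈ u, 2 ≤ a ∧ a ≤ T) (hv : ∀ a ∈ v, 2 ≤ a ∧ a ≤ T)
    (hcard : Multiset.card u + Multiset.card v ≤ T)
    (p : ℕ) (hpT : p ≤ T + 1)
    (heq : (u.map (fun a => (2 * T + 2) ^ a)).sum
          + Multiset.card v * (2 * T + 2) ^ (T + 1)
        = (2 * T + 2) ^ p + (v.map (fun a => (2 * T + 2) ^ a)).sum) :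
    ∀ i, u.count i + (if i = T + 1 then Multiset.card v else 0)
        = v.count i + (if i = p then 1 else 0) := by
  set B := 2 * T + 2 with hB
  have hB1 : 1 < B := by omega
  have huN : ∀ a ∈ u, a < T + 2 := fun a ha => by have := (hu a ha).2; omega
  have hvN : ∀ a ∈ v, a < T + 2 := fun a ha => by have := (hv a ha).2; omega
  set f : ℕ → ℕ := fun i => u.count i + (if i = T + 1 then Multiset.card v else 0) with hf
  set g : ℕ → ℕ := fun i => v.count i + (if i = p then 1 else 0) with hg
  have hfB : ∀ i, f i < B := by
    intro i
    have h1 := Multiset.count_le_card i u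
    simp only [hf]
    split <;> omega
  have hgB : ∀ i, g i < B := by
    intro i
    have h1 := Multiset.count_le_card i v
    simp only [hg]
    split <;> omega
  have hfsum : (∑ i ∈ Finset.range (T + 2), f i * B ^ i)
      = (u.map (fun a => B ^ a)).sum + Multiset.card v * B ^ (T + 1) := by
    simp only [hf, add_mul]
    rw [Finset.sum_add_distrib, ← sum_pow_count u huN,
      sum_ite_pow B (T + 2) (T + 1) (Multiset.card v) (by omega)]
  have hgsum : (∑ i ∈ Finset.range (T + 2), g i * B ^ i)
      = (v.map (fun a => B ^ a)).sum + 1 * B ^ p := by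
    simp only [hg, add_mul]
    rw [Finset.sum_add_distrib, ← sum_pow_count v hvN,
      sum_ite_pow B (T + 2) p 1 (by omega)]
  have hkey : ∀ i, i < T + 2 → f i = g i := by
    apply digit_unique hB1 (T + 2) f g hfB hgB
    rw [hfsum, hgsum, one_mul, heq]
    ring
  intro i
  by_cases hi : i < T + 2
  · exact hkey i hi
  · have hu0 : u.count i = 0 :=
      Multiset.count_eq_zero_of_notMem fun h => hi (huN i h)
    have hv0 : v.count i = 0 :=
      Multiset.count_eq_zero_of_notMem fun h => hi (hvN i h)
    rw [hu0, hv0, if_neg (by omega), if_neg (by omega)]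


lemma key (L : Set ℕ) (T : ℕ) (hT2 : 2 ≤ T) (hL : ∀ ℓ ∈ L, 2 ≤ ℓ ∧ ℓ ≤ T)
    (s : Multiset ℕ)
    (hs : ∀ a ∈ s, a = (2 * T + 2) ^ (T + 2)
        ∨ (∃ ℓ ∈ L, a = (T + 1 - ℓ) * (2 * T + 2) ^ (T + 2) + (2 * T + 2) ^ ℓ)
        ∨ (∃ ℓ ∈ L, a = (2 * T + 2) ^ (T + 2) + ((2 * T + 2) ^ (T + 1) - (2 * T + 2) ^ ℓ)))
    (Ct p : ℕ) (hCt : Ct ≤ T) (hpT : p ≤ T + 1)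
    (hsum : s.sum = Ct * (2 * T + 2) ^ (T + 2) + (2 * T + 2) ^ p) :
    (p = T + 1 ∧ ∃ ℓ ∈ L, Multiset.card s + T = ℓ + Ct)
    ∨ (p ≤ T ∧ Multiset.card s + T = Ct + p) := by
  have hB1 : 1 < 2 * T + 2 := by omega
  have hεn : (2 * T + 2) ^ (T + 1) < (2 * T + 2) ^ (T + 2) :=
    Nat.pow_lt_pow_right hB1 (by omega)
  have hε0 : 0 < (2 * T + 2) ^ (T + 1) := Nat.pow_pos (by omega)
  have hpow_le : ∀ q, q ≤ T + 1 → (2 * T + 2) ^ q ≤ (2 * T + 2) ^ (T + 1) :=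
    fun q hq => Nat.pow_le_pow_right (by omega) hq
  obtain ⟨x, u, v, hu, hv, hcard, hsum2⟩ :=
    decomp L (fun ℓ => (T + 1 - ℓ) * (2 * T + 2) ^ (T + 2) + (2 * T + 2) ^ ℓ)
      (fun ℓ => (2 * T + 2) ^ (T + 2) + ((2 * T + 2) ^ (T + 1) - (2 * T + 2) ^ ℓ))
      ((2 * T + 2) ^ (T + 2)) s hs
  have hScc : (u.map (fun ℓ => (T + 1 - ℓ) * (2 * T + 2) ^ (T + 2) + (2 * T + 2) ^ ℓ)).sum
      = (u.map (fun ℓ => T + 1 - ℓ)).sum * (2 * T + 2) ^ (T + 2)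
        + (u.map (fun ℓ => (2 * T + 2) ^ ℓ)).sum := by
    rw [Multiset.sum_map_add, Multiset.sum_map_mul_right]
  have hSdd : (v.map (fun ℓ => (2 * T + 2) ^ (T + 2)
        + ((2 * T + 2) ^ (T + 1) - (2 * T + 2) ^ ℓ))).sum
      = Multiset.card v * (2 * T + 2) ^ (T + 2)
        + (v.map (fun ℓ => (2 * T + 2) ^ (T + 1) - (2 * T + 2) ^ ℓ)).sum := by
    rw [Multiset.sum_map_add]
    congr 1
    simp [Multiset.map_const', Multiset.sum_replicate, smul_eq_mul, mul_comm]
  have htot : (x + (u.map (fun ℓ => T + 1 - ℓ)).sum + Multiset.card v) * (2 * T + 2) ^ (T + 2)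
      + ((u.map (fun ℓ => (2 * T + 2) ^ ℓ)).sum
        + (v.map (fun ℓ => (2 * T + 2) ^ (T + 1) - (2 * T + 2) ^ ℓ)).sum)
      = Ct * (2 * T + 2) ^ (T + 2) + (2 * T + 2) ^ p := by
    have h := hsum2
    rw [hScc, hSdd] at h
    rw [← hsum, h]
    ring
  have hAu_ge : Multiset.card u ≤ (u.map (fun ℓ => T + 1 - ℓ)).sum := by
    have h := Multiset.card_nsmul_le_sum (s := u.map fun ℓ => T + 1 - ℓ) (a := 1)
      (fun b hb => by
        obtain ⟨ℓ, hℓ, rfl⟩ := Multiset.mem_map.mp hb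
        have := (hL ℓ (hu ℓ hℓ)).2
        omega)
    simpa using h
  have hcardT : x + Multiset.card u + Multiset.card v ≤ T := by
    have h1 : (x + Multiset.card u + Multiset.card v) * (2 * T + 2) ^ (T + 2)
        ≤ (x + (u.map (fun ℓ => T + 1 - ℓ)).sum + Multiset.card v) * (2 * T + 2) ^ (T + 2) :=
      Nat.mul_le_mul_right _ (by omega)
    have h2 : Ct * (2 * T + 2) ^ (T + 2) + (2 * T + 2) ^ p
        < (T + 1) * (2 * T + 2) ^ (T + 2) := by
      have h3 := hpow_le p hpT
      have h4 : Ct * (2 * T + 2) ^ (T + 2) ≤ T * (2 * T + 2) ^ (T + 2) :=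
        Nat.mul_le_mul_right _ hCt
      have h5 : (T + 1) * (2 * T + 2) ^ (T + 2)
          = T * (2 * T + 2) ^ (T + 2) + (2 * T + 2) ^ (T + 2) := by ring
      omega
    have h6 : (x + Multiset.card u + Multiset.card v) * (2 * T + 2) ^ (T + 2)
        < (T + 1) * (2 * T + 2) ^ (T + 2) := by omega
    have h7 := lt_of_mul_lt_mul_right h6 (Nat.zero_le ((2 * T + 2) ^ (T + 2)))
    omega
  have hFu_le : (u.map (fun ℓ => (2 * T + 2) ^ ℓ)).sum
      ≤ Multiset.card u * (2 * T + 2) ^ (T + 1) := by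
    have h := Multiset.sum_le_card_nsmul (u.map fun ℓ => (2 * T + 2) ^ ℓ)
      ((2 * T + 2) ^ (T + 1))
      (fun b hb => by
        obtain ⟨ℓ, hℓ, rfl⟩ := Multiset.mem_map.mp hb
        exact hpow_le ℓ (by have := (hL ℓ (hu ℓ hℓ)).2; omega))
    simpa [smul_eq_mul] using h
  have hEv_le : (v.map (fun ℓ => (2 * T + 2) ^ (T + 1) - (2 * T + 2) ^ ℓ)).sum
      ≤ Multiset.card v * (2 * T + 2) ^ (T + 1) := by
    have h := Multiset.sum_le_card_nsmul
      (v.map fun ℓ => (2 * T + 2) ^ (T + 1) - (2 * T + 2) ^ ℓ)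
      ((2 * T + 2) ^ (T + 1))
      (fun b hb => by
        obtain ⟨ℓ, hℓ, rfl⟩ := Multiset.mem_map.mp hb
        exact Nat.sub_le _ _)
    simpa [smul_eq_mul] using h
  have hFbound : (u.map (fun ℓ => (2 * T + 2) ^ ℓ)).sum
      + (v.map (fun ℓ => (2 * T + 2) ^ (T + 1) - (2 * T + 2) ^ ℓ)).sum
      < (2 * T + 2) ^ (T + 2) := by
    have h1 : Multiset.card u * (2 * T + 2) ^ (T + 1)
        + Multiset.card v * (2 * T + 2) ^ (T + 1)
        = (Multiset.card u + Multiset.card v) * (2 * T + 2) ^ (T + 1) := by ring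
    have h2 : (Multiset.card u + Multiset.card v) * (2 * T + 2) ^ (T + 1)
        ≤ T * (2 * T + 2) ^ (T + 1) := Nat.mul_le_mul_right _ (by omega)
    have h3 : T * (2 * T + 2) ^ (T + 1) < (2 * T + 2) * (2 * T + 2) ^ (T + 1) :=
      (Nat.mul_lt_mul_right hε0).mpr (by omega)
    have h4 : (2 * T + 2) * (2 * T + 2) ^ (T + 1) = (2 * T + 2) ^ (T + 2) := by
      rw [pow_succ]; ring
    omega
  have hBp_lt : (2 * T + 2) ^ p < (2 * T + 2) ^ (T + 2) :=
    lt_of_le_of_lt (hpow_le p hpT) hεn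
  obtain ⟨hC, hF⟩ := euclid hFbound hBp_lt htot
  have hEvFv : (v.map (fun ℓ => (2 * T + 2) ^ (T + 1) - (2 * T + 2) ^ ℓ)).sum
      + (v.map (fun ℓ => (2 * T + 2) ^ ℓ)).sum
      = Multiset.card v * (2 * T + 2) ^ (T + 1) := by
    rw [← Multiset.sum_map_add]
    have h : (v.map fun ℓ => ((2 * T + 2) ^ (T + 1) - (2 * T + 2) ^ ℓ) + (2 * T + 2) ^ ℓ)
        = v.map fun _ => (2 * T + 2) ^ (T + 1) :=
      Multiset.map_congr rfl (fun ℓ hℓ => by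
        have h2 := hpow_le ℓ (by have := (hL ℓ (hv ℓ hℓ)).2; omega)
        omega)
    rw [h]
    simp [Multiset.map_const', Multiset.sum_replicate, smul_eq_mul, mul_comm]
  have heqd : (u.map (fun a => (2 * T + 2) ^ a)).sum
      + Multiset.card v * (2 * T + 2) ^ (T + 1)
      = (2 * T + 2) ^ p + (v.map (fun a => (2 * T + 2) ^ a)).sum := by omega
  have hcnt := fpart T hT2 u v (fun a ha => hL a (hu a ha)) (fun a ha => hL a (hv a ha))
    (by omega) p hpT heqd
  have hcu_top : u.count (T + 1) = 0 :=
    Multiset.count_eq_zero_of_notMem fun h => by have := (hL _ (hu _ h)).2; omega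
  have hcv_top : v.count (T + 1) = 0 :=
    Multiset.count_eq_zero_of_notMem fun h => by have := (hL _ (hv _ h)).2; omega
  by_cases hp : p = T + 1
  · left
    refine ⟨hp, ?_⟩
    have h1 := hcnt (T + 1)
    rw [if_pos rfl, if_pos hp.symm, hcu_top, hcv_top] at h1
    obtain ⟨ℓ, hvℓ⟩ := Multiset.card_eq_one.mp (by omega : Multiset.card v = 1)
    have hℓL : ℓ ∈ L := hv ℓ (by rw [hvℓ]; exact Multiset.mem_singleton_self ℓ)
    have huv : u = v := by
      ext i
      have h2 := hcnt i
      by_cases hi : i = T + 1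
      · subst hi; omega
      · rw [if_neg hi, if_neg (by omega)] at h2
        omega
    have hAu : (u.map (fun ℓ' => T + 1 - ℓ')).sum = T + 1 - ℓ := by
      rw [huv, hvℓ]; simp
    refine ⟨ℓ, hℓL, ?_⟩
    have hcu1 : Multiset.card u = 1 := by rw [huv, hvℓ]; simp
    have hℓT := (hL ℓ hℓL).2
    have hcv1 : Multiset.card v = 1 := by rw [hvℓ]; simp
    rw [hAu] at hC
    omega
  · right
    have hpT' : p ≤ T := by omega
    have h1 := hcnt (T + 1)
    rw [if_pos rfl, if_neg (by omega), hcu_top, hcv_top] at h1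
    have hv0 : v = 0 := Multiset.card_eq_zero.mp (by omega)
    have hup : u = {p} := by
      ext i
      have h2 := hcnt i
      rw [Multiset.count_singleton]
      by_cases hi : i = T + 1
      · subst hi
        rw [if_neg (by omega)]
        omega
      · rw [if_neg hi] at h2
        rw [hv0] at h2
        simp only [Multiset.count_zero] at h2
        by_cases hip : i = p
        · rw [if_pos hip]; rw [if_pos hip] at h2; omega
        · rw [if_neg hip]; rw [if_neg hip] at h2; omega
    have hAu : (u.map (fun ℓ' => T + 1 - ℓ')).sum = T + 1 - p := by rw [hup]; simp
    have hcu1 : Multiset.card u = 1 := by rw [hup]; simp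
    have hcv0 : Multiset.card v = 0 := by rw [hv0]; simp
    rw [hAu] at hC
    exact ⟨hpT', by omega⟩

lemma coprime_rep (a b N : ℕ) (ha : 0 < a) (hb : 0 < b) (h : Nat.Coprime a b)
    (hN : a * b ≤ N) : ∃ x y, N = x * a + y * b := by
  rcases eq_or_lt_of_le (show 1 ≤ b from hb) with hb1 | hb1
  · exact ⟨0, N, by simp [← hb1]⟩
  haveI : NeZero b := ⟨by omega⟩
  set A : (ZMod b)ˣ := ZMod.unitOfCoprime a h with hA
  set x : ℕ := ((N : ZMod b) * ((A⁻¹ : (ZMod b)ˣ) : ZMod b)).val with hx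
  have hxb : x < b := ZMod.val_lt _
  have hax : ((a * x : ℕ) : ZMod b) = (N : ZMod b) := by
    push_cast
    rw [hx, ZMod.natCast_val, ZMod.cast_id]
    have hAa : ((A : (ZMod b)ˣ) : ZMod b) = (a : ZMod b) := ZMod.coe_unitOfCoprime a h
    calc (a : ZMod b) * ((N : ZMod b) * ((A⁻¹ : (ZMod b)ˣ) : ZMod b))
        = (N : ZMod b) * (((A : (ZMod b)ˣ) : ZMod b) * ((A⁻¹ : (ZMod b)ˣ) : ZMod b)) := by
          rw [hAa]; ring
      _ = (N : ZMod b) := by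
          rw [← Units.val_mul, mul_inv_cancel]
          simp
  have hmod : a * x ≡ N [MOD b] := (ZMod.natCast_eq_natCast_iff _ _ _).mp hax
  have hle : a * x ≤ N := by
    have h1 : a * x < a * b := Nat.mul_lt_mul_of_le_of_lt (le_refl a) hxb ha
    omega
  obtain ⟨y, hy⟩ := (Nat.modEq_iff_dvd' hle).mp hmod
  exact ⟨x, y, by rw [Nat.mul_comm x a, Nat.mul_comm y b]; omega⟩


def nB (T : ℕ) : ℕ := (2 * T + 2) ^ (T + 2)
def eps (T : ℕ) : ℕ := (2 * T + 2) ^ (T + 1)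
def cc (T ℓ : ℕ) : ℕ := (T + 1 - ℓ) * nB T + (2 * T + 2) ^ ℓ
def dd (T ℓ : ℕ) : ℕ := nB T + (eps T - (2 * T + 2) ^ ℓ)
def mm (T : ℕ) : ℕ := T * nB T + eps T
def GG (T : ℕ) : ℕ := mm T * nB T + 1
def Sgen (L : Set ℕ) (T : ℕ) : Set ℕ :=
  {a | a = nB T ∨ (∃ ℓ ∈ L, a = cc T ℓ) ∨ (∃ ℓ ∈ L, a = dd T ℓ) ∨ a = GG T}


end Stmt10Aux

open Stmt10Aux in
theorem stmt10 (L : Set ℕ) (hfin : L.Finite) (hne : L.Nonempty)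
    (h2 : ∀ ℓ ∈ L, 2 ≤ ℓ) :
    ∃ (M : AddSubmonoid ℕ) (m : ℕ),
      {n : ℕ | n ∉ M}.Finite ∧ m ∈ M ∧ LengthSet M m = L := by
  classical
  obtain ⟨T, hTL, hTmax⟩ := Set.exists_max_image L id hfin hne
  simp only [id] at hTmax
  have hT2 : 2 ≤ T := h2 T hTL
  have hL : ∀ ℓ ∈ L, 2 ≤ ℓ ∧ ℓ ≤ T := fun ℓ hℓ => ⟨h2 ℓ hℓ, hTmax ℓ hℓ⟩
  -- basic size facts
  have hB1 : 1 < 2 * T + 2 := by omega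
  have hn_pos : 0 < nB T := Nat.pow_pos (by omega)
  have heps_pos : 0 < eps T := Nat.pow_pos (by omega)
  have heps_lt_n : eps T < nB T := Nat.pow_lt_pow_right hB1 (by omega)
  have hpow_le : ∀ q, q ≤ T + 1 → (2 * T + 2) ^ q ≤ eps T :=
    fun q hq => Nat.pow_le_pow_right (by omega) hq
  have hcc_ge_n : ∀ ℓ ∈ L, nB T ≤ cc T ℓ := by
    intro ℓ hℓ
    have h1 := (hL ℓ hℓ).2
    calc nB T = 1 * nB T := (one_mul _).symm
      _ ≤ (T + 1 - ℓ) * nB T := Nat.mul_le_mul_right _ (by omega)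
      _ ≤ cc T ℓ := Nat.le_add_right _ _
  have hdd_ge_n : ∀ ℓ : ℕ, nB T ≤ dd T ℓ := fun ℓ => Nat.le_add_right _ _
  have hgen_pos : ∀ a ∈ Sgen L T, 0 < a := by
    rintro a (rfl | ⟨ℓ, hℓ, rfl⟩ | ⟨ℓ, hℓ, rfl⟩ | rfl)
    · exact hn_pos
    · exact lt_of_lt_of_le hn_pos (hcc_ge_n ℓ hℓ)
    · exact lt_of_lt_of_le hn_pos (hdd_ge_n ℓ)
    · exact Nat.succ_pos _
  have hle_m : ∀ a : ℕ,
      (a = nB T ∨ (∃ ℓ ∈ L, a = cc T ℓ) ∨ (∃ ℓ ∈ L, a = dd T ℓ)) → a ≤ mm T := by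
    rintro a (rfl | ⟨ℓ, hℓ, rfl⟩ | ⟨ℓ, hℓ, rfl⟩)
    · calc nB T = 1 * nB T := (one_mul _).symm
        _ ≤ T * nB T := Nat.mul_le_mul_right _ (by omega)
        _ ≤ mm T := Nat.le_add_right _ _
    · obtain ⟨hℓ2, hℓT⟩ := hL ℓ hℓ
      have h1 : (T + 1 - ℓ) * nB T ≤ T * nB T := Nat.mul_le_mul_right _ (by omega)
      have h2 : (2 * T + 2) ^ ℓ ≤ eps T := hpow_le ℓ (by omega)
      simp only [cc, mm]
      omega
    · have h1 : eps T - (2 * T + 2) ^ ℓ ≤ eps T := Nat.sub_le _ _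
      have h2 : nB T ≤ T * nB T := by
        calc nB T = 1 * nB T := (one_mul _).symm
          _ ≤ T * nB T := Nat.mul_le_mul_right _ (by omega)
      simp only [dd, mm]
      omega
  have hm_lt_G : mm T < GG T := by
    have h1 : mm T ≤ mm T * nB T := Nat.le_mul_of_pos_right _ hn_pos
    simp only [GG]
    omega
  -- every atom of the monoid is a generator
  have hatom_gen : ∀ a, IsAtomOf (AddSubmonoid.closure (Sgen L T)) a → a ∈ Sgen L T := by
    rintro a ⟨haM, ha0, hsplit⟩
    obtain ⟨l, hl, hlsum⟩ := AddSubmonoid.exists_multiset_of_mem_closure haM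
    rcases hcl : Multiset.card l with _ | k
    · exact absurd (by rw [← hlsum, Multiset.card_eq_zero.mp hcl, Multiset.sum_zero]) ha0
    rcases k with _ | k
    · obtain ⟨b, rfl⟩ := Multiset.card_eq_one.mp hcl
      rw [← hlsum, Multiset.sum_singleton]
      exact hl b (Multiset.mem_singleton_self b)
    · exfalso
      -- card ≥ 2
      have hpos : 0 < Multiset.card l := by omega
      obtain ⟨b, hb⟩ := Multiset.card_pos_iff_exists_mem.mp hpos
      obtain ⟨t, rfl⟩ := Multiset.exists_cons_of_mem hb
      have hbM : b ∈ AddSubmonoid.closure (Sgen L T) :=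
        AddSubmonoid.subset_closure (hl b (Multiset.mem_cons_self b t))
      have htM : t.sum ∈ AddSubmonoid.closure (Sgen L T) :=
        AddSubmonoid.multiset_sum_mem _ _
          (fun c hc => AddSubmonoid.subset_closure (hl c (Multiset.mem_cons_of_mem hc)))
      have hbt : b + t.sum = a := by rw [← Multiset.sum_cons, hlsum]
      rcases hsplit b hbM t.sum htM hbt with hb0 | ht0
      · exact absurd hb0 (by have := hgen_pos b (hl b (Multiset.mem_cons_self b t)); omega)
      · have htpos : 0 < Multiset.card t := by
          rw [Multiset.card_cons] at hcl; omega
        obtain ⟨c, hc⟩ := Multiset.card_pos_iff_exists_mem.mp htpos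
        obtain ⟨t', rfl⟩ := Multiset.exists_cons_of_mem hc
        rw [Multiset.sum_cons] at ht0
        have := hgen_pos c (hl c (Multiset.mem_cons_of_mem (Multiset.mem_cons_self c t')))
        omega
  -- the main generators are atoms
  have hatom : ∀ a : ℕ,
      (a = nB T ∨ (∃ ℓ ∈ L, a = cc T ℓ) ∨ (∃ ℓ ∈ L, a = dd T ℓ)) →
      IsAtomOf (AddSubmonoid.closure (Sgen L T)) a := by
    intro a hgen3
    have haS : a ∈ Sgen L T := by
      rcases hgen3 with h | h | h
      · exact Or.inl h
      · exact Or.inr (Or.inl h)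
      · exact Or.inr (Or.inr (Or.inl h))
    refine ⟨AddSubmonoid.subset_closure haS, by have := hgen_pos a haS; omega, ?_⟩
    intro b hb c hc hbc
    by_contra hcon
    push_neg at hcon
    obtain ⟨hb0, hc0⟩ := hcon
    obtain ⟨lb, hlb, hlbsum⟩ := AddSubmonoid.exists_multiset_of_mem_closure hb
    obtain ⟨lc, hlc, hlcsum⟩ := AddSubmonoid.exists_multiset_of_mem_closure hc
    have hlb_ne : lb ≠ 0 := fun h => hb0 (by rw [← hlbsum, h, Multiset.sum_zero])
    have hlc_ne : lc ≠ 0 := fun h => hc0 (by rw [← hlcsum, h, Multiset.sum_zero])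
    have hs_card : 2 ≤ Multiset.card (lb + lc) := by
      rw [Multiset.card_add]
      have h1 := Multiset.card_pos.mpr hlb_ne
      have h2 := Multiset.card_pos.mpr hlc_ne
      omega
    have hs_sum : (lb + lc).sum = a := by
      rw [Multiset.sum_add, hlbsum, hlcsum, hbc]
    have hsS : ∀ d ∈ lb + lc, d ∈ Sgen L T := by
      intro d hd
      rcases Multiset.mem_add.mp hd with h | h
      · exact hlb d h
      · exact hlc d h
    have hs3 : ∀ d ∈ lb + lc,
        d = nB T ∨ (∃ ℓ ∈ L, d = cc T ℓ) ∨ (∃ ℓ ∈ L, d = dd T ℓ) := by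
      intro d hd
      rcases hsS d hd with h | h | h | h
      · exact Or.inl h
      · exact Or.inr (Or.inl h)
      · exact Or.inr (Or.inr h)
      · exfalso
        obtain ⟨t, ht⟩ := Multiset.exists_cons_of_mem hd
        have hd_le : d ≤ a := by
          rw [← hs_sum, ht, Multiset.sum_cons]; omega
        have ha_le := hle_m a hgen3
        rw [h] at hd_le
        omega
    have h2n : 2 * nB T ≤ a := by
      have h1 : ∀ d ∈ lb + lc, nB T ≤ d := by
        intro d hd
        rcases hs3 d hd with rfl | ⟨ℓ, hℓ, rfl⟩ | ⟨ℓ, hℓ, rfl⟩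
        · exact le_refl _
        · exact hcc_ge_n ℓ hℓ
        · exact hdd_ge_n ℓ
      have h2 := Multiset.card_nsmul_le_sum h1
      rw [hs_sum, smul_eq_mul] at h2
      calc 2 * nB T ≤ Multiset.card (lb + lc) * nB T := Nat.mul_le_mul_right _ hs_card
        _ ≤ a := h2
    rcases hgen3 with rfl | ⟨ℓ0, hℓ0, rfl⟩ | ⟨ℓ0, hℓ0, rfl⟩
    · omega
    · -- a = cc T ℓ0 : use the key analysis
      obtain ⟨hℓ2, hℓT⟩ := hL ℓ0 hℓ0
      have hkey := key L T hT2 hL (lb + lc)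
        (by simpa only [nB, cc, dd, eps] using hs3)
        (T + 1 - ℓ0) ℓ0 (by omega) (by omega)
        (by rw [hs_sum]; simp only [cc, nB])
      rcases hkey with ⟨hp, _⟩ | ⟨_, hcard⟩
      · omega
      · omega
    · -- a = dd T ℓ0 : too small
      have h3 : eps T - (2 * T + 2) ^ ℓ0 ≤ eps T := Nat.sub_le _ _
      simp only [dd] at h2n
      omega
  -- coprimality and cofiniteness
  have hco : Nat.Coprime (nB T) (GG T) := by
    have h1 : GG T = 1 + mm T * nB T := by simp only [GG]; ring
    simp only [Nat.Coprime]
    rw [h1, Nat.gcd_add_mul_right_right (nB T) 1 (mm T)]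
    exact Nat.gcd_one_right _
  have hG_pos : 0 < GG T := Nat.succ_pos _
  have hrep : ∀ N, nB T * GG T ≤ N → N ∈ AddSubmonoid.closure (Sgen L T) := by
    intro N hN
    obtain ⟨x, y, hxy⟩ := coprime_rep (nB T) (GG T) N hn_pos hG_pos hco hN
    rw [hxy]
    refine AddSubmonoid.add_mem _ ?_ ?_
    · have hmem : nB T ∈ AddSubmonoid.closure (Sgen L T) :=
        AddSubmonoid.subset_closure (show nB T ∈ Sgen L T from Or.inl rfl)
      simpa [smul_eq_mul] using AddSubmonoid.nsmul_mem _ hmem x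
    · have hmem : GG T ∈ AddSubmonoid.closure (Sgen L T) :=
        AddSubmonoid.subset_closure (show GG T ∈ Sgen L T from Or.inr (Or.inr (Or.inr rfl)))
      simpa [smul_eq_mul] using AddSubmonoid.nsmul_mem _ hmem y
  -- representation of m with length ℓ0
  have hsum_rep : ∀ ℓ0 ∈ L,
      (Multiset.replicate (ℓ0 - 2) (nB T) + (cc T ℓ0 ::ₘ {dd T ℓ0})).sum = mm T := by
    intro ℓ0 hℓ0
    obtain ⟨hℓ2, hℓT⟩ := hL ℓ0 hℓ0
    rw [Multiset.sum_add, Multiset.sum_replicate, Multiset.sum_cons, Multiset.sum_singleton]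
    simp only [smul_eq_mul, cc, dd, mm]
    have hpow : (2 * T + 2) ^ ℓ0 ≤ eps T := hpow_le ℓ0 (by omega)
    have h1 : (ℓ0 - 2) * nB T + ((T + 1 - ℓ0) * nB T + (2 * T + 2) ^ ℓ0
          + (nB T + (eps T - (2 * T + 2) ^ ℓ0)))
        = ((ℓ0 - 2) + (T + 1 - ℓ0) + 1) * nB T
          + ((2 * T + 2) ^ ℓ0 + (eps T - (2 * T + 2) ^ ℓ0)) := by ring
    rw [h1, show (ℓ0 - 2) + (T + 1 - ℓ0) + 1 = T from by omega,
      Nat.add_sub_cancel' hpow]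
  have hmm_mem : mm T ∈ AddSubmonoid.closure (Sgen L T) := by
    rw [← hsum_rep T hTL]
    refine AddSubmonoid.multiset_sum_mem _ _ ?_
    intro d hd
    rcases Multiset.mem_add.mp hd with h | h
    · rw [Multiset.eq_of_mem_replicate h]
      exact AddSubmonoid.subset_closure (Or.inl rfl)
    · rcases Multiset.mem_cons.mp h with rfl | h2
      · exact AddSubmonoid.subset_closure (Or.inr (Or.inl ⟨T, hTL, rfl⟩))
      · rw [Multiset.mem_singleton.mp h2]
        exact AddSubmonoid.subset_closure (Or.inr (Or.inr (Or.inl ⟨T, hTL, rfl⟩)))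
  refine ⟨AddSubmonoid.closure (Sgen L T), mm T, ?_, hmm_mem, ?_⟩
  · -- cofiniteness
    apply Set.Finite.subset (Set.finite_lt_nat (nB T * GG T))
    intro z hz
    simp only [Set.mem_setOf_eq] at hz ⊢
    by_contra hlt
    push_neg at hlt
    exact hz (hrep z hlt)
  · -- length set equality
    ext ℓ0
    simp only [LengthSet, Set.mem_setOf_eq]
    constructor
    · rintro ⟨s, hscard, hsatom, hssum⟩
      have hs3 : ∀ d ∈ s,
          d = nB T ∨ (∃ ℓ ∈ L, d = cc T ℓ) ∨ (∃ ℓ ∈ L, d = dd T ℓ) := by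
        intro d hd
        rcases hatom_gen d (hsatom d hd) with h | h | h | h
        · exact Or.inl h
        · exact Or.inr (Or.inl h)
        · exact Or.inr (Or.inr h)
        · exfalso
          obtain ⟨t, ht⟩ := Multiset.exists_cons_of_mem hd
          have hd_le : d ≤ mm T := by rw [← hssum, ht, Multiset.sum_cons]; omega
          rw [h] at hd_le
          omega
      have hkey := key L T hT2 hL s (by simpa only [nB, cc, dd, eps] using hs3)
        T (T + 1) le_rfl le_rfl (by rw [hssum]; simp only [mm, nB, eps])
      rcases hkey with ⟨_, ℓ, hℓ, hcard⟩ | ⟨hp, _⟩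
      · have : ℓ0 = ℓ := by omega
        rwa [this]
      · omega
    · intro hℓ0
      obtain ⟨hℓ2, hℓT⟩ := hL ℓ0 hℓ0
      refine ⟨Multiset.replicate (ℓ0 - 2) (nB T) + (cc T ℓ0 ::ₘ {dd T ℓ0}), ?_, ?_,
        hsum_rep ℓ0 hℓ0⟩
      · simp only [Multiset.card_add, Multiset.card_replicate, Multiset.card_cons,
          Multiset.card_singleton]
        omega
      · intro d hd
        rcases Multiset.mem_add.mp hd with h | h
        · rw [Multiset.eq_of_mem_replicate h]
          exact hatom _ (Or.inl rfl)
        · rcases Multiset.mem_cons.mp h with rfl | h2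
          · exact hatom _ (Or.inr (Or.inl ⟨ℓ0, hℓ0, rfl⟩))
          · rw [Multiset.mem_singleton.mp h2]
            exact hatom _ (Or.inr (Or.inr ⟨ℓ0, hℓ0, rfl⟩))
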